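/- Let a, b, c, d be positive integers with ad − bc ≠ 0. In the field ℂ(x,y) of rational functions in two variables over ℂ, let L be the subfield generated over ℂ by the two monomials x^a y^b and x^c y^d. Then ℂ(x,y) is a finite extension of L of degree exactly |ad − bc|. -/

import Mathlib

open MvPolynomial

set_option maxHeartbeats 1000000
set_option synthInstance.maxHeartbeats 400000

noncomputable section DegAux

namespace DegMonAux

open Module

/-- The cardinality of the quotient of `ι → ℤ` by the span of linearly independent vectors
equals the absolute value of the determinant of the matrix of those vectors. -/
lemma card_quotient_span_eq_natAbs_det {ι : Type*} [Fintype ι] [DecidableEq ι]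
    (v : ι → (ι → ℤ)) (hv : LinearIndependent ℤ v) :
    Nat.card ((ι → ℤ) ⧸ Submodule.span ℤ (Set.range v)) =
      (Matrix.det (Matrix.of fun i j => v j i)).natAbs := by
  classical
  set N := Submodule.span ℤ (Set.range v) with hN
  obtain ⟨n, snf⟩ := N.smithNormalForm (Pi.basisFun ℤ ι)
  obtain ⟨bM, bN, f, a, hsnf⟩ := snf
  have hn : Fintype.card ι = n := by
    have e : ι ≃ Fin n := Basis.indexEquiv (Basis.span hv) bN
    simpa using Fintype.card_congr e
  have hfbij : Function.Bijective f :=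
    (Fintype.bijective_iff_injective_and_card f).2 ⟨f.injective, by simp [hn]⟩
  let σ : Fin n ≃ ι := Equiv.ofBijective f hfbij
  have hidx : Nat.card ((ι → ℤ) ⧸ N) = ∏ i : Fin n, (a i).natAbs := by
    have h := Basis.SmithNormalForm.toAddSubgroup_index_eq_pow_mul_prod ⟨bM, bN, f, a, hsnf⟩
    simp [← hn, Ideal.span_singleton_toAddSubgroup_eq_zmultiples, Int.index_zmultiples] at h
    rw [← h]; rfl
  let eV : (ι → ℤ) ≃ₗ[ℤ] N := (Pi.basisFun ℤ ι).equiv (Basis.span hv) (Equiv.refl ι)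
  let b' : Basis (Fin n) ℤ (ι → ℤ) := bM.reindex σ.symm
  let eN : (ι → ℤ) ≃ₗ[ℤ] N := b'.equiv bN (Equiv.refl _)
  let g1 : (ι → ℤ) →ₗ[ℤ] (ι → ℤ) := N.subtype ∘ₗ (eV : (ι → ℤ) →ₗ[ℤ] N)
  let g2 : (ι → ℤ) →ₗ[ℤ] (ι → ℤ) := N.subtype ∘ₗ (eN : (ι → ℤ) →ₗ[ℤ] N)
  have hg1 : LinearMap.det g1 = Matrix.det (Matrix.of fun i j => v j i) := by
    rw [← LinearMap.det_toMatrix (Pi.basisFun ℤ ι)]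
    congr 1
    ext i j
    rw [LinearMap.toMatrix_apply]
    simp only [g1, LinearMap.comp_apply, LinearEquiv.coe_coe, Submodule.coe_subtype]
    rw [show (Pi.basisFun ℤ ι) j = Pi.basisFun ℤ ι j from rfl]
    rw [Basis.equiv_apply, Basis.span_apply]
    simp
  have hg2 : LinearMap.det g2 = ∏ i : Fin n, a i := by
    rw [← LinearMap.det_toMatrix b']
    have hmat : LinearMap.toMatrix b' b' g2 = Matrix.diagonal a := by
      ext i j
      rw [LinearMap.toMatrix_apply]
      have hb'j : b' j = bM (σ j) := by simp [b']
      have h2 : eN (b' j) = bN j := b'.equiv_apply j bN (Equiv.refl _)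
      have h3 : g2 (b' j) = a j • bM (σ j) := by
        simp only [g2, LinearMap.comp_apply, LinearEquiv.coe_coe, Submodule.coe_subtype]
        rw [h2, hsnf j]
        rfl
      rw [h3, ← hb'j, map_smul]
      simp [Basis.repr_self, Finsupp.single_apply, Matrix.diagonal_apply, eq_comm]
      rcases eq_or_ne i j with rfl | hij
      · simp
      · simp [hij, Ne.symm hij]
    rw [hmat, Matrix.det_diagonal]
  have hrel : g1 = g2 ∘ₗ ((eV.trans eN.symm : (ι → ℤ) ≃ₗ[ℤ] (ι → ℤ)) :
      (ι → ℤ) →ₗ[ℤ] (ι → ℤ)) := by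
    ext w j
    simp [g1, g2]
  have hunit : IsUnit (LinearMap.det ((eV.trans eN.symm : (ι → ℤ) ≃ₗ[ℤ] (ι → ℤ)) :
      (ι → ℤ) →ₗ[ℤ] (ι → ℤ))) := (eV.trans eN.symm).isUnit_det'
  have hdet : (Matrix.det (Matrix.of fun i j => v j i)).natAbs =
      (∏ i : Fin n, a i).natAbs := by
    rw [← hg1, ← hg2, hrel, LinearMap.det_comp]
    rcases Int.isUnit_iff.1 hunit with h | h <;> simp [h, Int.natAbs_mul]
  rw [hidx, hdet]
  exact (map_prod Int.natAbsHom a Finset.univ).symm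

abbrev R2 := MvPolynomial (Fin 2) ℂ
abbrev K2 := FractionRing R2

/-- The scaling algebra homomorphism on `ℂ[x,y]`. -/
def scaleHom (c : Fin 2 → ℂˣ) : R2 →ₐ[ℂ] R2 := aeval (fun i => (c i : ℂ) • X i)

lemma scaleHom_comp (c c' : Fin 2 → ℂˣ) :
    (scaleHom c).comp (scaleHom c') = scaleHom (c * c') := by
  apply algHom_ext
  intro i
  simp [scaleHom, Algebra.smul_def]
  ring

lemma scaleHom_one : scaleHom 1 = AlgHom.id ℂ R2 := algHom_ext fun i => by simp [scaleHom]

/-- The scaling algebra automorphism of `ℂ[x,y]`. -/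
def scaleEquiv (c : Fin 2 → ℂˣ) : R2 ≃ₐ[ℂ] R2 :=
  AlgEquiv.ofAlgHom (scaleHom c) (scaleHom c⁻¹)
    (by rw [scaleHom_comp, mul_inv_cancel, scaleHom_one])
    (by rw [scaleHom_comp, inv_mul_cancel, scaleHom_one])

/-- The scaling automorphism of `ℂ(x,y)`. -/
def scaleK (c : Fin 2 → ℂˣ) : K2 ≃ₐ[ℂ] K2 := IsFractionRing.algEquivOfAlgEquiv (scaleEquiv c)

lemma scaleK_X (c : Fin 2 → ℂˣ) (i : Fin 2) :
    scaleK c (algebraMap R2 K2 (X i)) = (c i : ℂ) • algebraMap R2 K2 (X i) := by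
  rw [scaleK, IsFractionRing.algEquivOfAlgEquiv_algebraMap]
  simp only [scaleEquiv, scaleHom, AlgEquiv.ofAlgHom_apply, aeval_X]
  rw [Algebra.smul_def, map_mul, ← IsScalarTower.algebraMap_apply ℂ R2 K2, ← Algebra.smul_def]

lemma csmul_eq (c : ℂ) (z : K2) : c • z = algebraMap ℂ K2 c * z := Algebra.smul_def c z

lemma XK_ne_zero (i : Fin 2) : algebraMap R2 K2 (X i) ≠ 0 := by
  have := IsFractionRing.injective R2 K2
  intro h
  exact (X_ne_zero (R := ℂ) i) (this (by simpa using h))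

/-- `X i` as a unit of `K2`. -/
def XU (i : Fin 2) : K2ˣ := Units.mk0 _ (XK_ne_zero i)

/-- The monomial `x^(v 0) * y^(v 1)` as a unit of `K2`. -/
def mon (v : Fin 2 → ℤ) : K2ˣ := XU 0 ^ (v 0) * XU 1 ^ (v 1)

lemma mon_add (v w : Fin 2 → ℤ) : mon (v + w) = mon v * mon w := by
  simp only [mon, Pi.add_apply, zpow_add]
  exact mul_mul_mul_comm (XU 0 ^ v 0) (XU 0 ^ w 0) (XU 1 ^ v 1) (XU 1 ^ w 1)

lemma mon_zero : mon 0 = 1 := by simp [mon]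

lemma mon_zsmul (n : ℤ) (v : Fin 2 → ℤ) : mon (n • v) = mon v ^ n := by
  simp only [mon, Pi.smul_apply, smul_eq_mul, mul_comm n, zpow_mul]
  exact (mul_zpow (XU 0 ^ v 0) (XU 1 ^ v 1) n).symm

lemma mon_single (i : Fin 2) : (mon (Pi.single i 1) : K2) = algebraMap R2 K2 (X i) := by
  fin_cases i <;> simp [mon, XU, Pi.single_apply]

end DegMonAux

end DegAux

open DegMonAux Module in
/-- In `ℂ(x,y)`, the fraction field of `ℂ[x,y]`, let `L` be the subfield
generated over `ℂ` by the monomials `x^a y^b` and `x^c y^d`, where `a, b, c, d` are positive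
integers with `ad - bc ≠ 0`. Then `ℂ(x,y)` is a finite extension of `L` of degree `|ad - bc|`. -/
theorem degree_over_monomial_subfield
    (a b c d : ℕ) (ha : 0 < a) (hb : 0 < b) (hc : 0 < c) (hd : 0 < d)
    (hdet : (a : ℤ) * d - (b : ℤ) * c ≠ 0)
    (x y : FractionRing (MvPolynomial (Fin 2) ℂ))
    (hx : x = algebraMap (MvPolynomial (Fin 2) ℂ) _ (X 0))
    (hy : y = algebraMap (MvPolynomial (Fin 2) ℂ) _ (X 1))
    (L : IntermediateField ℂ (FractionRing (MvPolynomial (Fin 2) ℂ)))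
    (hL : L = IntermediateField.adjoin ℂ ({x ^ a * y ^ b, x ^ c * y ^ d} :
      Set (FractionRing (MvPolynomial (Fin 2) ℂ)))) :
    FiniteDimensional L (FractionRing (MvPolynomial (Fin 2) ℂ)) ∧
    Module.finrank L (FractionRing (MvPolynomial (Fin 2) ℂ)) =
      ((a : ℤ) * d - (b : ℤ) * c).natAbs := by
  classical
  -- the exponent vectors
  set va : Fin 2 → ℤ := ![(a : ℤ), (b : ℤ)] with hva
  set vc : Fin 2 → ℤ := ![(c : ℤ), (d : ℤ)] with hvc
  have hliv : LinearIndependent ℤ ![va, vc] := by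
    rw [LinearIndependent.pair_iff]
    intro s t hst
    have h0 : s * a + t * c = 0 := by
      have := congrFun hst 0
      simpa [va, vc] using this
    have h1 : s * b + t * d = 0 := by
      have := congrFun hst 1
      simpa [va, vc] using this
    constructor
    · have : s * ((a : ℤ) * d - b * c) = d * (s * a + t * c) - c * (s * b + t * d) := by ring
      have hs : s * ((a : ℤ) * d - b * c) = 0 := by rw [this, h0, h1]; ring
      exact (mul_eq_zero.1 hs).resolve_right hdet
    · have : t * ((a : ℤ) * d - b * c) = a * (s * b + t * d) - b * (s * a + t * c) := by ring
      have ht : t * ((a : ℤ) * d - b * c) = 0 := by rw [this, h0, h1]; ring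
      exact (mul_eq_zero.1 ht).resolve_right hdet
  set Λ : Submodule ℤ (Fin 2 → ℤ) := Submodule.span ℤ (Set.range ![va, vc]) with hΛ
  -- cardinality of the quotient
  have hcard : Nat.card ((Fin 2 → ℤ) ⧸ Λ) = ((a : ℤ) * d - (b : ℤ) * c).natAbs := by
    rw [hΛ, card_quotient_span_eq_natAbs_det _ hliv]
    congr 1
    rw [show (Matrix.of fun i j => ![va, vc] j i) = !![(a : ℤ), (c : ℤ); (b : ℤ), (d : ℤ)] by
      ext i j; fin_cases i <;> fin_cases j <;> simp [va, vc]]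
    rw [Matrix.det_fin_two_of]
    ring
  have hcard_ne : Nat.card ((Fin 2 → ℤ) ⧸ Λ) ≠ 0 := by
    rw [hcard]
    simpa using hdet
  haveI hQfin : Finite ((Fin 2 → ℤ) ⧸ Λ) := (Nat.card_ne_zero.1 hcard_ne).2
  haveI : Fintype ((Fin 2 → ℤ) ⧸ Λ) := Fintype.ofFinite _
  -- membership of lattice monomials in L
  have hvaΛ : va ∈ Λ := Submodule.subset_span ⟨0, rfl⟩
  have hvcΛ : vc ∈ Λ := Submodule.subset_span ⟨1, rfl⟩
  have hmonva : (mon va : K2) = x ^ a * y ^ b := by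
    rw [hx, hy]
    simp [mon, XU, va, zpow_natCast]
  have hmonvc : (mon vc : K2) = x ^ c * y ^ d := by
    rw [hx, hy]
    simp [mon, XU, vc, zpow_natCast]
  have hΛL : ∀ v ∈ Λ, (mon v : K2) ∈ L := by
    intro v hv
    induction hv using Submodule.span_induction with
    | mem w hw =>
      rcases hw with ⟨i, rfl⟩
      have hi : ![va, vc] i = va ∨ ![va, vc] i = vc := by fin_cases i <;> simp
      rcases hi with hi | hi
      · rw [hi, hmonva, hL]
        exact IntermediateField.subset_adjoin _ _ (Set.mem_insert _ _)
      · rw [hi, hmonvc, hL]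
        exact IntermediateField.subset_adjoin _ _ (Set.mem_insert_of_mem _ rfl)
    | zero => rw [mon_zero]; exact one_mem L
    | add v w _ _ hv hw => rw [mon_add]; push_cast; exact mul_mem hv hw
    | smul n v _ hv =>
      rw [mon_zsmul]
      push_cast
      exact zpow_mem hv n
  -- the span of coset-representative monomials over L
  set Q := (Fin 2 → ℤ) ⧸ Λ with hQ
  set g : Q → K2 := fun q => (mon q.out : K2) with hg
  set S : Submodule L K2 := Submodule.span L (Set.range g) with hS
  have hmemS : ∀ v : Fin 2 → ℤ, (mon v : K2) ∈ S := by
    intro v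
    have hout : Submodule.Quotient.mk (Quotient.out (Submodule.Quotient.mk v : Q))
        = (Submodule.Quotient.mk v : Q) := Quotient.out_eq _
    have hdiff : v - (Quotient.out (Submodule.Quotient.mk v : Q)) ∈ Λ :=
      (Submodule.Quotient.eq Λ).1 hout.symm
    let l : L := ⟨(mon (v - (Quotient.out (Submodule.Quotient.mk v : Q))) : K2), hΛL _ hdiff⟩
    have heq : (mon v : K2) = l • g (Submodule.Quotient.mk v) := by
      have hv' : (v - (Quotient.out (Submodule.Quotient.mk v : Q)))
          + (Quotient.out (Submodule.Quotient.mk v : Q)) = v := sub_add_cancel _ _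
      show (mon v : K2) = (l : K2) * g (Submodule.Quotient.mk v)
      calc (mon v : K2) = (mon ((v - (Quotient.out (Submodule.Quotient.mk v : Q)))
            + (Quotient.out (Submodule.Quotient.mk v : Q))) : K2) := by rw [hv']
        _ = (mon (v - (Quotient.out (Submodule.Quotient.mk v : Q))) : K2)
            * (mon (Quotient.out (Submodule.Quotient.mk v : Q)) : K2) := by
              rw [mon_add]; rfl
        _ = (l : K2) * g (Submodule.Quotient.mk v) := rfl
    rw [heq]
    exact S.smul_mem l (Submodule.subset_span ⟨_, rfl⟩)
  have h1S : (1 : K2) ∈ S := by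
    have := hmemS 0
    rwa [mon_zero, Units.val_one] at this
  have hmulS : ∀ z w : K2, z ∈ S → w ∈ S → z * w ∈ S := by
    have hss : S * S ≤ S := by
      conv_lhs => rw [hS, Submodule.span_mul_span]
      refine Submodule.span_le.2 ?_
      rintro t ht
      rw [Set.mem_mul] at ht
      obtain ⟨z, ⟨q, rfl⟩, w, ⟨q', rfl⟩, rfl⟩ := ht
      have hgg : g q * g q' = (mon (q.out + q'.out) : K2) := by rw [mon_add]; rfl
      rw [hgg]
      exact hmemS _
    exact fun z w hz hw => hss (Submodule.mul_mem_mul hz hw)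
  have hfg : S.FG := by
    rw [hS]
    exact Submodule.fg_span (Set.finite_range g)
  set SA : Subalgebra L K2 := S.toSubalgebra h1S (fun z w hz hw => hmulS z w hz hw) with hSA
  have halg : ∀ z : K2, z ∈ SA → IsAlgebraic L z := fun z hz =>
    (IsIntegral.of_mem_of_fg SA hfg z hz).isAlgebraic
  have hinv : ∀ z : K2, z ∈ SA → z⁻¹ ∈ SA := fun z hz =>
    SA.inv_mem_of_algebraic (x := ⟨z, hz⟩) (halg z hz)
  have hpoly : ∀ p : R2, algebraMap R2 K2 p ∈ SA := by
    intro p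
    induction p using MvPolynomial.induction_on with
    | C z =>
      have h1 : algebraMap R2 K2 (C z) = algebraMap ℂ K2 z := by
        rw [IsScalarTower.algebraMap_apply ℂ R2 K2 z, MvPolynomial.algebraMap_eq]
      rw [h1]
      have h2 : algebraMap ℂ K2 z ∈ L := L.algebraMap_mem z
      exact SA.algebraMap_mem (⟨algebraMap ℂ K2 z, h2⟩ : L)
    | add p q hp hq => rw [map_add]; exact SA.add_mem hp hq
    | mul_X p i hp =>
      rw [map_mul]
      refine SA.mul_mem hp ?_
      show algebraMap R2 K2 (X i) ∈ S
      rw [← mon_single i]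
      exact hmemS _
  have hallK : ∀ z : K2, z ∈ SA := by
    intro z
    obtain ⟨p, q, hq, hz⟩ := IsFractionRing.div_surjective (A := R2) z
    rw [← hz, div_eq_mul_inv]
    exact SA.mul_mem (hpoly p) (hinv _ (hpoly q))
  have hStop : S = ⊤ := Submodule.eq_top_iff'.2 fun z => hallK z
  haveI hfinK : FiniteDimensional L K2 := ⟨hStop ▸ hfg⟩
  have hup : finrank L K2 ≤ Nat.card Q := by
    calc finrank L K2 = finrank L (⊤ : Submodule L K2) := (finrank_top L K2).symm
      _ = finrank L S := by rw [hStop]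
      _ ≤ (Set.range g).toFinset.card := by
          rw [hS]
          exact finrank_span_le_card _
      _ ≤ Fintype.card Q := by
          rw [Set.toFinset_range]
          exact Finset.card_image_le.trans (by simp)
      _ = Nat.card Q := (Nat.card_eq_fintype_card).symm
  -- lower bound via scaling automorphisms attached to characters of Q
  haveI : NeZero (Monoid.exponent (Multiplicative Q)) := ⟨Monoid.exponent_ne_zero_of_finite⟩
  obtain ⟨eχ⟩ := CommGroup.monoidHom_mulEquiv_of_hasEnoughRootsOfUnity (Multiplicative Q) ℂ
  set cc : (Multiplicative Q →* ℂˣ) → (Fin 2 → ℂˣ) := fun χ i =>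
    χ (Multiplicative.ofAdd (Submodule.Quotient.mk (Pi.single i 1))) with hcc
  have hχmon : ∀ (χ : Multiplicative Q →* ℂˣ) (v : Fin 2 → ℤ),
      χ (Multiplicative.ofAdd (Submodule.Quotient.mk v : Q))
        = (cc χ 0) ^ (v 0) * (cc χ 1) ^ (v 1) := by
    intro χ v
    have hdecomp : v = v 0 • (Pi.single 0 1 : Fin 2 → ℤ) + v 1 • Pi.single 1 1 := by
      funext i; fin_cases i <;> simp
    conv_lhs => rw [hdecomp]
    rw [show (Submodule.Quotient.mk (v 0 • (Pi.single 0 1 : Fin 2 → ℤ) + v 1 • Pi.single 1 1) : Q)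
        = v 0 • (Submodule.Quotient.mk (Pi.single 0 1)) + v 1 • Submodule.Quotient.mk (Pi.single 1 1) by
      rw [Submodule.Quotient.mk_add, Submodule.Quotient.mk_smul, Submodule.Quotient.mk_smul]]
    rw [ofAdd_add, map_mul, ofAdd_zsmul, ofAdd_zsmul, map_zpow, map_zpow]
  have hσmon : ∀ (χ : Multiplicative Q →* ℂˣ) (v : Fin 2 → ℤ),
      scaleK (cc χ) (mon v : K2)
        = algebraMap ℂ K2 ((χ (Multiplicative.ofAdd (Submodule.Quotient.mk v : Q)) : ℂˣ) : ℂ)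
            * (mon v : K2) := by
    intro χ v
    have hval : (mon v : K2) = (algebraMap R2 K2 (X 0)) ^ (v 0)
        * (algebraMap R2 K2 (X 1)) ^ (v 1) := by
      simp [mon, XU, Units.val_mul]
    rw [hval, map_mul, map_zpow₀, map_zpow₀, scaleK_X, scaleK_X, csmul_eq, csmul_eq,
      mul_zpow, mul_zpow, hχmon, Units.val_mul, Units.val_zpow_eq_zpow_val, Units.val_zpow_eq_zpow_val, map_mul,
      map_zpow₀, map_zpow₀]
    ring
  have hfixL : ∀ (χ : Multiplicative Q →* ℂˣ), ∀ z ∈ L, scaleK (cc χ) z = z := by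
    intro χ z hz
    rw [hL] at hz
    refine IntermediateField.adjoin_induction ℂ ?_ ?_ ?_ ?_ ?_ hz
    · intro w hw
      have hone : ∀ u ∈ Λ, scaleK (cc χ) (mon u : K2) = (mon u : K2) := by
        intro u hu
        rw [hσmon]
        rw [show (Submodule.Quotient.mk u : Q) = 0 from (Submodule.Quotient.mk_eq_zero _).2 hu]
        simp
      rcases hw with hw | hw
      · rw [hw, ← hmonva]
        exact hone va hvaΛ
      · rw [Set.mem_singleton_iff.1 hw, ← hmonvc]
        exact hone vc hvcΛ
    · intro w
      exact (scaleK (cc χ)).commutes w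
    · intro w w' _ _ hw hw'
      rw [map_add, hw, hw']
    · intro w _ hw
      rw [map_inv₀, hw]
    · intro w w' _ _ hw hw'
      rw [map_mul, hw, hw']
  set Φ : (Multiplicative Q →* ℂˣ) → (K2 ≃ₐ[L] K2) := fun χ =>
    AlgEquiv.ofRingEquiv (f := (scaleK (cc χ)).toRingEquiv)
      (fun l => hfixL χ (l : K2) l.2) with hΦ
  have hΦapp : ∀ χ (z : K2), Φ χ z = scaleK (cc χ) z := fun χ z => rfl
  have hΦinj : Function.Injective Φ := by
    intro χ χ' h
    have happ : ∀ z : K2, scaleK (cc χ) z = scaleK (cc χ') z := by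
      intro z
      rw [← hΦapp, ← hΦapp, h]
    have hcceq : cc χ = cc χ' := by
      funext i
      have h1 := happ (algebraMap R2 K2 (X i))
      rw [scaleK_X, scaleK_X, csmul_eq, csmul_eq] at h1
      have h2 := mul_right_cancel₀ (XK_ne_zero i) h1
      exact Units.ext ((algebraMap ℂ K2).injective h2)
    apply MonoidHom.ext
    intro z
    obtain ⟨v, hv⟩ := Submodule.Quotient.mk_surjective Λ (Multiplicative.toAdd z)
    have hz : z = Multiplicative.ofAdd (Submodule.Quotient.mk v : Q) := by
      rw [hv]; rfl
    rw [hz, hχmon, hχmon, hcceq]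
  have hlow : Nat.card Q ≤ finrank L K2 := by
    have h1 : Nat.card (Multiplicative Q →* ℂˣ) = Nat.card Q := Nat.card_congr eχ.toEquiv
    have h2 : Nat.card (Multiplicative Q →* ℂˣ) ≤ Nat.card (K2 ≃ₐ[L] K2) :=
      Nat.card_le_card_of_injective Φ hΦinj
    have h3 : Nat.card (K2 ≃ₐ[L] K2) ≤ finrank L K2 := by
      rw [Nat.card_eq_fintype_card]
      calc Fintype.card (K2 ≃ₐ[L] K2) = Fintype.card (K2 →ₐ[L] K2) :=
            Fintype.card_congr (algEquivEquivAlgHom L K2).toEquiv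
        _ ≤ finrank K2 (K2 →ₗ[L] K2) := finrank_algHom L K2
        _ = finrank L K2 := finrank_linearMap_self L K2 K2
    omega
  exact ⟨hfinK, by rw [← hcard]; exact le_antisymm hup hlow⟩
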